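/- Let Λ ⊂ ℝ^d be open bounded convex with B(0, a₀) ⊂ Λ, and let l : Λ̄ → ℝ be convex with ∫_Λ |l(y)| dy ≤ M. Then sup_{y ∈ B̄(0, a₀/2)} |l(y)| is bounded by a constant depending only on d, a₀, Λ and M (local uniform boundedness of convex functions with bounded L¹ norm). -/

import Mathlib

open MeasureTheory Metric

private lemma integral_id_ball' {d : ℕ} (c : EuclideanSpace ℝ (Fin d)) (ρ : ℝ) :
    ∫ x in Metric.ball c ρ, x ∂(volume : Measure (EuclideanSpace ℝ (Fin d)))
      = (volume (Metric.ball c ρ)).toReal • c := by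
  set B := Metric.ball c ρ with hB
  have hint : IntegrableOn (fun x => x) B volume :=
    (continuousOn_id.integrableOn_compact (isCompact_closedBall c ρ)).mono_set
      Metric.ball_subset_closedBall
  set F : EuclideanSpace ℝ (Fin d) → EuclideanSpace ℝ (Fin d) := B.indicator id with hF
  have hmem : ∀ x : EuclideanSpace ℝ (Fin d), ((2:ℝ) • c - x ∈ B) ↔ x ∈ B := by
    intro x
    have h1 : (2:ℝ) • c - x - c = -(x - c) := by
      rw [two_smul]; abel
    simp only [hB, Metric.mem_ball, dist_eq_norm, h1, norm_neg]
  have key : ∫ x, F ((2:ℝ) • c - x) ∂volume = ∫ x, F x ∂volume := by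
    have h1 : ∀ x, F ((2:ℝ) • c - x) = (F ∘ Neg.neg) (x - (2:ℝ) • c) := by
      intro x; simp [Function.comp, neg_sub]
    simp_rw [h1]
    rw [integral_sub_right_eq_self (F ∘ Neg.neg) ((2:ℝ) • c)]
    exact integral_neg_eq_self F volume
  have hleft : ∫ x, F ((2:ℝ) • c - x) ∂volume
      = (volume B).toReal • ((2:ℝ) • c) - ∫ x in B, x ∂volume := by
    have h2 : ∀ x, F ((2:ℝ) • c - x) = B.indicator (fun x => (2:ℝ) • c - x) x := by
      intro x
      by_cases hx : x ∈ B
      · rw [Set.indicator_of_mem hx, hF, Set.indicator_of_mem ((hmem x).2 hx)]; rfl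
      · rw [Set.indicator_of_notMem hx, hF,
          Set.indicator_of_notMem (fun h => hx ((hmem x).1 h))]
    simp_rw [h2]
    rw [integral_indicator measurableSet_ball,
      integral_sub (show IntegrableOn (fun _ => (2:ℝ) • c) B volume from
        integrableOn_const measure_ball_lt_top.ne) hint,
      setIntegral_const, measureReal_def]
  have hright : ∫ x, F x ∂volume = ∫ x in B, x ∂volume := by
    rw [hF, integral_indicator measurableSet_ball]; rfl
  rw [hleft, hright] at key
  have h2 : (2:ℝ) • (∫ x in B, x ∂volume) = (2:ℝ) • ((volume B).toReal • c) := by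
    rw [two_smul]
    nth_rewrite 1 [← key]
    rw [smul_comm]
    abel
  exact smul_right_injective _ (two_ne_zero) h2

private lemma two_smul_sub_mem_ball' {d : ℕ} (y z : EuclideanSpace ℝ (Fin d)) (s : ℝ) :
    (2:ℝ) • z - y ∈ Metric.ball (0 : EuclideanSpace ℝ (Fin d)) (2 * s)
      ↔ z ∈ Metric.ball ((2:ℝ)⁻¹ • y) s := by
  have h : (2:ℝ) • z - y = (2:ℝ) • (z - (2:ℝ)⁻¹ • y) := by
    rw [smul_sub, smul_inv_smul₀ (two_ne_zero)]
  simp only [Metric.mem_ball, dist_eq_norm, sub_zero, h, norm_smul, Real.norm_two]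
  constructor <;> intro hh <;> nlinarith [norm_nonneg (z - (2:ℝ)⁻¹ • y)]

private lemma integral_comp_two_smul_sub' {d : ℕ} (L : EuclideanSpace ℝ (Fin d) → ℝ)
    (y : EuclideanSpace ℝ (Fin d)) (s : ℝ) :
    ∫ z in Metric.ball ((2:ℝ)⁻¹ • y) s, L ((2:ℝ) • z - y) ∂volume
      = ((2:ℝ) ^ d)⁻¹ • ∫ x in Metric.ball (0 : EuclideanSpace ℝ (Fin d)) (2 * s), L x ∂volume := by
  set G := (Metric.ball (0 : EuclideanSpace ℝ (Fin d)) (2 * s)).indicator L with hG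
  have h1 : ∀ z, (Metric.ball ((2:ℝ)⁻¹ • y) s).indicator (fun z => L ((2:ℝ) • z - y)) z
      = G ((2:ℝ) • z - y) := by
    intro z
    by_cases hz : z ∈ Metric.ball ((2:ℝ)⁻¹ • y) s
    · rw [Set.indicator_of_mem hz, hG,
        Set.indicator_of_mem ((two_smul_sub_mem_ball' y z s).2 hz)]
    · rw [Set.indicator_of_notMem hz, hG,
        Set.indicator_of_notMem (fun h => hz ((two_smul_sub_mem_ball' y z s).1 h))]
  have h2 : ∀ z : EuclideanSpace ℝ (Fin d),
      G ((2:ℝ) • z - y) = (fun w => G ((2:ℝ) • w)) (z - (2:ℝ)⁻¹ • y) := by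
    intro z
    simp only
    rw [smul_sub, smul_inv_smul₀ (two_ne_zero)]
  calc ∫ z in Metric.ball ((2:ℝ)⁻¹ • y) s, L ((2:ℝ) • z - y) ∂volume
      = ∫ z, G ((2:ℝ) • z - y) ∂volume := by
        rw [← integral_indicator measurableSet_ball]; simp_rw [h1]
    _ = ∫ z, (fun w => G ((2:ℝ) • w)) (z - (2:ℝ)⁻¹ • y) ∂volume := by simp_rw [h2]
    _ = ∫ w, G ((2:ℝ) • w) ∂volume :=
        integral_sub_right_eq_self (μ := volume) (fun w => G ((2:ℝ) • w)) ((2:ℝ)⁻¹ • y)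
    _ = |(((2:ℝ) ^ Module.finrank ℝ (EuclideanSpace ℝ (Fin d)))⁻¹)| • ∫ x, G x ∂volume :=
        Measure.integral_comp_smul volume G 2
    _ = ((2:ℝ) ^ d)⁻¹ • ∫ x in Metric.ball (0 : EuclideanSpace ℝ (Fin d)) (2 * s), L x ∂volume := by
        rw [hG, integral_indicator measurableSet_ball, finrank_euclideanSpace_fin,
          abs_of_nonneg (by positivity)]


/-- local uniform boundedness of convex functions with bounded
`L¹` norm: if `Λ ⊂ ℝ^d` is open bounded convex with `B(0,a₀) ⊆ Λ`, there is a
constant `C` (depending only on `d, a₀, Λ, M`) bounding `|l|` on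
`B̄(0, a₀/2)` for every convex `l : Λ̄ → ℝ` with `∫_Λ |l| ≤ M`. -/
theorem statement_11 {d : ℕ} (a₀ M : ℝ) (ha₀ : 0 < a₀)
    (Λ : Set (EuclideanSpace ℝ (Fin d))) (hΛo : IsOpen Λ)
    (hΛb : Bornology.IsBounded Λ) (hΛc : Convex ℝ Λ)
    (hball : Metric.ball 0 a₀ ⊆ Λ) :
    ∃ C : ℝ, ∀ l : EuclideanSpace ℝ (Fin d) → ℝ,
      ConvexOn ℝ (closure Λ) l →
      IntegrableOn l Λ volume →
      (∫ y in Λ, |l y| ∂volume) ≤ M →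
      ∀ y ∈ Metric.closedBall (0 : EuclideanSpace ℝ (Fin d)) (a₀ / 2), |l y| ≤ C := by
  classical
  set r : ℝ := a₀ / 8 with hrdef
  have hr : 0 < r := by positivity
  set v1 : ℝ := (volume (Metric.ball (0 : EuclideanSpace ℝ (Fin d)) r)).toReal with hv1def
  set v2 : ℝ := (volume (Metric.ball (0 : EuclideanSpace ℝ (Fin d)) (r / 2))).toReal with hv2def
  have hv1 : 0 < v1 :=
    ENNReal.toReal_pos (measure_ball_pos volume _ hr).ne' measure_ball_lt_top.ne
  have hv2 : 0 < v2 :=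
    ENNReal.toReal_pos (measure_ball_pos volume _ (by positivity)).ne' measure_ball_lt_top.ne
  refine ⟨max (M / v1) (3 * M / v2), ?_⟩
  intro l hl hint hM y hy
  have hM0 : 0 ≤ M :=
    le_trans (setIntegral_nonneg hΛo.measurableSet fun x _ => abs_nonneg _) hM
  have hy' : ‖y‖ ≤ a₀ / 2 := by rwa [Metric.mem_closedBall, dist_zero_right] at hy
  have hsub : Metric.closedBall (0 : EuclideanSpace ℝ (Fin d)) (3 * a₀ / 4) ⊆ Λ :=
    (Metric.closedBall_subset_ball (by linarith)).trans hball
  have hcl : Metric.closedBall (0 : EuclideanSpace ℝ (Fin d)) (3 * a₀ / 4) ⊆ closure Λ :=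
    hsub.trans subset_closure
  have hconv : ConvexOn ℝ (Metric.closedBall (0 : EuclideanSpace ℝ (Fin d)) (3 * a₀ / 4)) l :=
    hl.subset hcl (convex_closedBall _ _)
  have hcont : ContinuousOn l (Metric.closedBall (0 : EuclideanSpace ℝ (Fin d)) (3 * a₀ / 4)) :=
    ((hl.subset (hball.trans subset_closure) (convex_ball _ _)).continuousOn
      Metric.isOpen_ball).mono (Metric.closedBall_subset_ball (by linarith))
  -- integrability of `l` on small balls
  have hIball : ∀ (c : EuclideanSpace ℝ (Fin d)) (s : ℝ),
      Metric.closedBall c s ⊆ Metric.closedBall (0 : EuclideanSpace ℝ (Fin d)) (3 * a₀ / 4) →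
      IntegrableOn l (Metric.ball c s) volume := fun c s hcs =>
    ((hcont.mono hcs).integrableOn_compact (isCompact_closedBall c s)).mono_set
      Metric.ball_subset_closedBall
  -- integral bound on subsets of Λ
  have habs : ∀ B : Set (EuclideanSpace ℝ (Fin d)), B ⊆ Λ → MeasurableSet B →
      IntegrableOn l B volume → |∫ x in B, l x ∂volume| ≤ M := by
    intro B hBΛ hBm hBi
    calc |∫ x in B, l x ∂volume| ≤ ∫ x in B, |l x| ∂volume := by
          simpa using norm_integral_le_integral_norm (μ := volume.restrict B) l
      _ ≤ ∫ x in Λ, |l x| ∂volume :=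
          setIntegral_mono_set hint.abs (Filter.Eventually.of_forall fun x => abs_nonneg _)
            (HasSubset.Subset.eventuallyLE hBΛ)
      _ ≤ M := hM
  -- upper bound via Jensen
  have hup : l y ≤ M / v1 := by
    have hcb : Metric.closedBall y r
        ⊆ Metric.closedBall (0 : EuclideanSpace ℝ (Fin d)) (3 * a₀ / 4) :=
      Metric.closedBall_subset_closedBall' (by rw [dist_zero_right]; linarith)
    set B := Metric.ball y r with hBdef
    haveI : IsFiniteMeasure (volume.restrict B) :=
      ⟨by rw [Measure.restrict_apply_univ]; exact measure_ball_lt_top⟩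
    haveI : NeZero (volume.restrict B) :=
      ⟨Measure.measure_univ_ne_zero.1
        (by rw [Measure.restrict_apply_univ]; exact (measure_ball_pos volume y hr).ne')⟩
    have hfi : Integrable (fun x => x) (volume.restrict B) :=
      (continuousOn_id.integrableOn_compact (isCompact_closedBall y r)).mono_set
        Metric.ball_subset_closedBall
    have hgi : Integrable (l ∘ fun x => x) (volume.restrict B) := hIball y r hcb
    have hfs : ∀ᵐ x ∂(volume.restrict B),
        (fun x => x) x ∈ Metric.closedBall (0 : EuclideanSpace ℝ (Fin d)) (3 * a₀ / 4) :=
      (ae_restrict_mem measurableSet_ball).mono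
        (fun x hx => hcb (Metric.ball_subset_closedBall hx))
    have hJ := hconv.map_average_le hcont Metric.isClosed_closedBall hfs hfi hgi
    have hBvol : (volume B).toReal = v1 := by
      rw [hv1def, hBdef, Measure.addHaar_ball_center]
    have havg : (⨍ x in B, x ∂volume) = y := by
      rw [setAverage_eq, integral_id_ball', smul_smul, ← hBdef, ← measureReal_def,
        inv_mul_cancel₀ (by rw [measureReal_def, hBvol]; exact hv1.ne'), one_smul]
    have hintB : ∫ x in B, l x ∂volume ≤ M :=
      le_trans (le_abs_self _)
        (habs B ((Metric.ball_subset_closedBall.trans hcb).trans hsub) measurableSet_ball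
          (hIball y r hcb))
    have havg2 : ⨍ x in B, l x ∂volume ≤ M / v1 := by
      rw [setAverage_eq, measureReal_def, hBvol, smul_eq_mul, div_eq_inv_mul]
      exact mul_le_mul_of_nonneg_left hintB (inv_nonneg.2 hv1.le)
    calc l y = l (⨍ x in B, x ∂volume) := by rw [havg]
      _ ≤ ⨍ x in B, l x ∂volume := hJ
      _ ≤ M / v1 := havg2
  -- lower bound
  have hlow : -(3 * M / v2) ≤ l y := by
    have hny : ‖(2:ℝ)⁻¹ • y‖ ≤ a₀ / 4 := by
      rw [norm_smul, norm_inv, Real.norm_two]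
      linarith
    have hcb2 : Metric.closedBall ((2:ℝ)⁻¹ • y) (r / 2)
        ⊆ Metric.closedBall (0 : EuclideanSpace ℝ (Fin d)) (3 * a₀ / 4) :=
      Metric.closedBall_subset_closedBall' (by rw [dist_zero_right]; linarith)
    set B := Metric.ball ((2:ℝ)⁻¹ • y) (r / 2) with hBdef
    have hBvol : (volume B).toReal = v2 := by
      rw [hv2def, hBdef, Measure.addHaar_ball_center]
    -- pointwise convexity inequality
    have hpt : ∀ z ∈ B, 2 * l z - l ((2:ℝ) • z - y) ≤ l y := by
      intro z hz
      have hyΛ : y ∈ closure Λ :=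
        subset_closure (hball (by rw [Metric.mem_ball, dist_zero_right]; linarith))
      have hxball : (2:ℝ) • z - y ∈ Metric.ball (0 : EuclideanSpace ℝ (Fin d)) r := by
        have := (two_smul_sub_mem_ball' y z (r / 2)).2 hz
        rwa [mul_div_cancel₀ _ (two_ne_zero)] at this
      have hxΛ : (2:ℝ) • z - y ∈ closure Λ :=
        subset_closure (hball (Metric.ball_subset_ball (by linarith) hxball))
      have h := hl.2 hyΛ hxΛ (by norm_num : (0:ℝ) ≤ 2⁻¹) (by norm_num : (0:ℝ) ≤ 2⁻¹)
        (by norm_num)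
      have hzeq : (2:ℝ)⁻¹ • y + (2:ℝ)⁻¹ • ((2:ℝ) • z - y) = z := by
        rw [smul_sub, smul_smul]; norm_num
      rw [hzeq] at h
      simp only [smul_eq_mul] at h
      linarith
    have hi1 : IntegrableOn l B volume := hIball _ _ hcb2
    have hi2 : IntegrableOn (fun z => l ((2:ℝ) • z - y)) B volume := by
      have hmaps : Set.MapsTo (fun z => (2:ℝ) • z - y)
          (Metric.closedBall ((2:ℝ)⁻¹ • y) (r / 2))
          (Metric.closedBall (0 : EuclideanSpace ℝ (Fin d)) (3 * a₀ / 4)) := by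
        intro z hz
        rw [Metric.mem_closedBall, dist_eq_norm] at hz ⊢
        have heq : (2:ℝ) • z - y - 0 = (2:ℝ) • (z - (2:ℝ)⁻¹ • y) := by
          rw [smul_sub, smul_inv_smul₀ (two_ne_zero), sub_zero]
        rw [heq, norm_smul, Real.norm_two]
        linarith
      exact ((hcont.comp ((continuous_const_smul _).sub continuous_const).continuousOn
        hmaps).integrableOn_compact (isCompact_closedBall _ _)).mono_set
        Metric.ball_subset_closedBall
    have hmono : ∫ z in B, (2 * l z - l ((2:ℝ) • z - y)) ∂volume
        ≤ ∫ z in B, l y ∂volume :=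
      setIntegral_mono_on ((hi1.const_mul 2).sub hi2)
        (integrableOn_const measure_ball_lt_top.ne) measurableSet_ball hpt
    have hsplit : ∫ z in B, (2 * l z - l ((2:ℝ) • z - y)) ∂volume
        = 2 * ∫ z in B, l z ∂volume - ∫ z in B, l ((2:ℝ) • z - y) ∂volume := by
      rw [integral_sub (hi1.const_mul 2) hi2, integral_const_mul]
    have h1 : -M ≤ ∫ z in B, l z ∂volume :=
      neg_le_of_abs_le (habs B ((Metric.ball_subset_closedBall.trans hcb2).trans hsub)
        measurableSet_ball hi1)
    have h2 : ∫ z in B, l ((2:ℝ) • z - y) ∂volume ≤ M := by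
      rw [hBdef, integral_comp_two_smul_sub' l y (r / 2), mul_div_cancel₀ _ (two_ne_zero)]
      have hA : |∫ x in Metric.ball (0 : EuclideanSpace ℝ (Fin d)) r, l x ∂volume| ≤ M :=
        habs _ ((Metric.ball_subset_closedBall.trans
          (Metric.closedBall_subset_closedBall (by linarith))).trans hsub) measurableSet_ball
          (hIball 0 r (Metric.closedBall_subset_closedBall (by linarith)))
      have hc1 : ((2:ℝ) ^ d)⁻¹ ≤ 1 := by
        rw [inv_le_one_iff₀]
        right
        exact one_le_pow₀ (by norm_num)
      have := abs_le.1 hA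
      rw [smul_eq_mul]
      nlinarith [abs_nonneg (∫ x in Metric.ball (0 : EuclideanSpace ℝ (Fin d)) r, l x ∂volume),
        inv_nonneg.2 (pow_nonneg (by norm_num : (0:ℝ) ≤ 2) d)]
    have hconst : ∫ z in B, l y ∂volume = v2 * l y := by
      rw [setIntegral_const, measureReal_def, hBvol, smul_eq_mul]
    have : -(3 * M) ≤ v2 * l y := by
      rw [← hconst]
      calc -(3 * M) ≤ 2 * ∫ z in B, l z ∂volume - ∫ z in B, l ((2:ℝ) • z - y) ∂volume := by
            linarith
        _ = ∫ z in B, (2 * l z - l ((2:ℝ) • z - y)) ∂volume := hsplit.symm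
        _ ≤ ∫ z in B, l y ∂volume := hmono
    rw [← neg_div, div_le_iff₀ hv2, mul_comm]
    linarith
  rw [abs_le]
  constructor
  · have := le_max_right (M / v1) (3 * M / v2)
    linarith
  · exact hup.trans (le_max_left _ _)
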